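/- The commuting property [Z_j, Z_k] = 0 holds for the operators Z_j := ⟨ζ⟩^{-1}(hD_{z_j} − ζ_j) + (1/2)⟨ζ⟩^{-3}ζ_j(hD_z − ζ)² − ihD_{ζ_j} − (n/4)h⟨ζ⟩^{-2}ζ_j, j = 1,…,n, acting on holomorphic functions on the region where ⟨ζ⟩ = (1+ζ·ζ)^{1/2} is defined and nonvanishing. -/

import Mathlib

open Complex

noncomputable section

/-- The operator
`Z_j = ⟨ζ⟩^{-1}(hD_{z_j} − ζ_j) + (1/2)⟨ζ⟩^{-3}ζ_j(hD_z − ζ)² − ihD_{ζ_j} − (n/4)h⟨ζ⟩^{-2}ζ_j`. -/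
def Zop (n : ℕ) (h : ℝ) (j : Fin n)
    (f : (Fin n → ℂ) × (Fin n → ℂ) → ℂ)
    (p : (Fin n → ℂ) × (Fin n → ℂ)) : ℂ :=
  let br : ℂ := (1 + ∑ k, (p.2 k) ^ 2) ^ ((1 : ℂ) / 2)
  br⁻¹ * (((h : ℂ) / Complex.I) * fderiv ℂ f p (Pi.single j 1, 0) - p.2 j * f p) +
  (1 / 2) * (br ^ 3)⁻¹ * p.2 j *
    (∑ k, (((h : ℂ) / Complex.I) *
        fderiv ℂ (fun q : (Fin n → ℂ) × (Fin n → ℂ) =>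
          ((h : ℂ) / Complex.I) * fderiv ℂ f q (Pi.single k 1, 0) - q.2 k * f q)
          p (Pi.single k 1, 0) -
      p.2 k * (((h : ℂ) / Complex.I) * fderiv ℂ f p (Pi.single k 1, 0) - p.2 k * f p))) -
  Complex.I * (((h : ℂ) / Complex.I) * fderiv ℂ f p (0, Pi.single j 1)) -
  ((n : ℂ) / 4) * (h : ℂ) * (br ^ 2)⁻¹ * p.2 j * f p

/-- The region where `⟨ζ⟩ = (1+ζ·ζ)^{1/2}` is defined and nonvanishing (off the
branch cut). -/
def offCut (n : ℕ) (p : (Fin n → ℂ) × (Fin n → ℂ)) : Prop :=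
  ¬((1 + ∑ k, (p.2 k) ^ 2).im = 0 ∧ (1 + ∑ k, (p.2 k) ^ 2).re ≤ 0)

namespace ZopAux

abbrev Vn (n : ℕ) := (Fin n → ℂ) × (Fin n → ℂ)

variable {n : ℕ}

def sfun (n : ℕ) (p : Vn n) : ℂ := 1 + ∑ k, (p.2 k) ^ 2
def bfun (n : ℕ) (p : Vn n) : ℂ := sfun n p ^ ((1 : ℂ) / 2)
def ez (m : Fin n) : Vn n := (Pi.single m 1, 0)
def ew (m : Fin n) : Vn n := (0, Pi.single m 1)
def pd (v : Vn n) (g : Vn n → ℂ) (p : Vn n) : ℂ := fderiv ℂ g p v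
def Aop (h : ℝ) (m : Fin n) (g : Vn n → ℂ) (p : Vn n) : ℂ :=
  ((h : ℂ) / Complex.I) * pd (ez m) g p - p.2 m * g p
def An (n : ℕ) (g : Vn n → ℂ) : Prop := ∀ p, offCut n p → AnalyticAt ℂ g p
def c1 (n : ℕ) (p : Vn n) : ℂ := (bfun n p)⁻¹
def c3 (n : ℕ) (k : Fin n) (p : Vn n) : ℂ := (1 / 2) * ((bfun n p) ^ 3)⁻¹ * p.2 k
def c2 (n : ℕ) (h : ℝ) (k : Fin n) (p : Vn n) : ℂ :=
  ((n : ℂ) / 4) * (h : ℂ) * ((bfun n p) ^ 2)⁻¹ * p.2 k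

lemma Zop_eq (h : ℝ) (j : Fin n) (g : Vn n → ℂ) (p : Vn n) :
    Zop n h j g p =
      c1 n p * Aop h j g p + c3 n j p * (∑ m, Aop h m (Aop h m g) p) -
      Complex.I * (((h : ℂ) / Complex.I) * pd (ew j) g p) - c2 n h j p * g p := rfl

variable {p : Vn n}

lemma offCut_iff (p : Vn n) : offCut n p ↔ sfun n p ∈ Complex.slitPlane := by
  unfold offCut sfun
  rw [Complex.mem_slitPlane_iff, not_and_or, not_le]
  tauto

lemma continuous_sfun : Continuous (sfun n) := by
  unfold sfun
  exact continuous_const.add (continuous_finset_sum _ fun k _ =>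
    ((continuous_apply k).comp continuous_snd).pow 2)

lemma isOpen_offCut : IsOpen {p : Vn n | offCut n p} := by
  have e : {p : Vn n | offCut n p} = sfun n ⁻¹' Complex.slitPlane := by
    ext p; simpa using offCut_iff p
  rw [e]
  exact Complex.isOpen_slitPlane.preimage continuous_sfun


lemma sfun_ne (hp : offCut n p) : sfun n p ≠ 0 :=
  Complex.slitPlane_ne_zero ((offCut_iff p).1 hp)

lemma An_zeta (m : Fin n) (p : Vn n) : AnalyticAt ℂ (fun q : Vn n => q.2 m) p :=
  ((ContinuousLinearMap.proj m).comp
    (ContinuousLinearMap.snd ℂ (Fin n → ℂ) (Fin n → ℂ))).analyticAt p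

lemma An_sfun (p : Vn n) : AnalyticAt ℂ (sfun n) p :=
  analyticAt_const.add (Finset.analyticAt_fun_sum _ fun k _ => (An_zeta k p).fun_pow 2)

lemma An_bfun (hp : offCut n p) : AnalyticAt ℂ (bfun n) p :=
  (An_sfun p).cpow analyticAt_const ((offCut_iff p).1 hp)

lemma bfun_sq (hp : offCut n p) : bfun n p ^ 2 = sfun n p := by
  unfold bfun
  rw [sq, ← Complex.cpow_add _ _ (sfun_ne hp)]
  norm_num

lemma bfun_ne (hp : offCut n p) : bfun n p ≠ 0 := by
  unfold bfun
  simp [Complex.cpow_eq_zero_iff, sfun_ne hp]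


variable {u w g : Vn n → ℂ} {v : Vn n}


lemma An.diff (hg : An n g) (hp : offCut n p) : DifferentiableAt ℂ g p :=
  (hg p hp).differentiableAt

lemma pd_congr (huw : ∀ q, offCut n q → u q = w q) (hp : offCut n p) (v : Vn n) :
    pd v u p = pd v w p := by
  have e : u =ᶠ[nhds p] w := by
    filter_upwards [isOpen_offCut.mem_nhds hp] with q hq using huw q hq
  unfold pd
  rw [e.fderiv_eq]

lemma pd_add (hu : DifferentiableAt ℂ u p) (hw : DifferentiableAt ℂ w p) (v : Vn n) :
    pd v (fun q => u q + w q) p = pd v u p + pd v w p := by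
  unfold pd; rw [fderiv_fun_add hu hw]; simp

lemma pd_sub (hu : DifferentiableAt ℂ u p) (hw : DifferentiableAt ℂ w p) (v : Vn n) :
    pd v (fun q => u q - w q) p = pd v u p - pd v w p := by
  unfold pd; rw [fderiv_fun_sub hu hw]; simp

lemma pd_mul (hu : DifferentiableAt ℂ u p) (hw : DifferentiableAt ℂ w p) (v : Vn n) :
    pd v (fun q => u q * w q) p = u p * pd v w p + w p * pd v u p := by
  unfold pd; rw [fderiv_fun_mul hu hw]; simp

lemma pd_cmul (c : ℂ) (hu : DifferentiableAt ℂ u p) (v : Vn n) :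
    pd v (fun q => c * u q) p = c * pd v u p := by
  unfold pd; rw [fderiv_const_mul hu c]; simp

lemma pd_sum {ι : Type*} (s : Finset ι) (F : ι → Vn n → ℂ)
    (hu : ∀ i ∈ s, DifferentiableAt ℂ (F i) p) (v : Vn n) :
    pd v (fun q => ∑ i ∈ s, F i q) p = ∑ i ∈ s, pd v (F i) p := by
  unfold pd; rw [fderiv_fun_sum hu]; simp

lemma pd_const (c : ℂ) (v : Vn n) : pd v (fun _ : Vn n => c) p = 0 := by
  unfold pd; simp

lemma pd_zeta (m : Fin n) (v : Vn n) : pd v (fun q : Vn n => q.2 m) p = v.2 m := by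
  have e : (fun q : Vn n => q.2 m) = ⇑((ContinuousLinearMap.proj m).comp
      (ContinuousLinearMap.snd ℂ (Fin n → ℂ) (Fin n → ℂ))) := rfl
  unfold pd
  rw [e, ContinuousLinearMap.fderiv]
  rfl

lemma An.pdv (hg : An n g) (v : Vn n) : An n (pd v g) := fun p hp =>
  ((ContinuousLinearMap.apply ℂ ℂ v).analyticAt (fderiv ℂ g p)).comp (hg p hp).fderiv

lemma pd_swap (hg : An n g) (hp : offCut n p) (v w : Vn n) :
    pd v (pd w g) p = pd w (pd v g) p := by
  have hdf : DifferentiableAt ℂ (fderiv ℂ g) p := (hg p hp).fderiv.differentiableAt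
  have hsymm : IsSymmSndFDerivAt ℂ g p :=
    ((hg p hp).contDiffAt (n := 2)).isSymmSndFDerivAt (by norm_num)
  have e : ∀ a b : Vn n, fderiv ℂ (fun q => fderiv ℂ g q b) p a = fderiv ℂ (fderiv ℂ g) p a b := by
    intro a b
    rw [fderiv_clm_apply hdf (differentiableAt_const b)]
    simp
  unfold pd
  rw [e, e, hsymm v w]

lemma pd_inv (hu : DifferentiableAt ℂ u p) (h0 : u p ≠ 0) (v : Vn n) :
    pd v (fun q => (u q)⁻¹) p = -(pd v u p) * ((u p) ^ 2)⁻¹ := by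
  unfold pd
  have e : (fun q => (u q)⁻¹) = (fun z : ℂ => z⁻¹) ∘ u := rfl
  rw [e, fderiv_comp p (differentiableAt_inv h0) hu, fderiv_inv]
  simp


lemma pd_pow (hu : DifferentiableAt ℂ u p) (M : ℕ) (v : Vn n) :
    pd v (fun q => u q ^ (M + 1)) p = (M + 1 : ℂ) * u p ^ M * pd v u p := by
  induction M with
  | zero => simp only [zero_add, pow_one, pow_zero, Nat.cast_zero]; ring
  | succ M ih =>
      have e : (fun q => u q ^ (M + 1 + 1)) = fun q => u q ^ (M + 1) * u q := by
        funext q; rw [pow_succ]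
      rw [e, pd_mul (hu.fun_pow _) hu, ih]
      push_cast; ring




lemma An.mul (hu : An n u) (hw : An n w) : An n (fun q => u q * w q) :=
  fun p hp => (hu p hp).mul (hw p hp)

lemma An.add (hu : An n u) (hw : An n w) : An n (fun q => u q + w q) :=
  fun p hp => (hu p hp).add (hw p hp)

lemma An.sub (hu : An n u) (hw : An n w) : An n (fun q => u q - w q) :=
  fun p hp => (hu p hp).sub (hw p hp)

lemma An.cmul (c : ℂ) (hu : An n u) : An n (fun q => c * u q) :=
  fun p hp => analyticAt_const.mul (hu p hp)

lemma An.sum {ι : Type*} (s : Finset ι) (F : ι → Vn n → ℂ) (hF : ∀ i, An n (F i)) :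
    An n (fun q => ∑ i ∈ s, F i q) :=
  fun p hp => Finset.analyticAt_fun_sum _ fun i _ => hF i p hp

lemma An_zeta' (m : Fin n) : An n (fun q : Vn n => q.2 m) := fun p _ => An_zeta m p

lemma An.aop (hu : An n u) (h : ℝ) (m : Fin n) : An n (Aop h m u) :=
  fun p hp => (analyticAt_const.mul ((hu.pdv (ez m)) p hp)).sub
    ((An_zeta m p).mul (hu p hp))

lemma An_c1 : An n (c1 n) := fun p hp => (An_bfun hp).inv (bfun_ne hp)

lemma An_c3 (k : Fin n) : An n (c3 n k) := fun p hp =>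
  (analyticAt_const.mul (((An_bfun hp).pow 3).inv (pow_ne_zero 3 (bfun_ne hp)))).mul
    (An_zeta k p)

lemma An_c2 (h : ℝ) (k : Fin n) : An n (c2 n h k) := fun p hp =>
  (analyticAt_const.mul (((An_bfun hp).pow 2).inv (pow_ne_zero 2 (bfun_ne hp)))).mul
    (An_zeta k p)

lemma An.zop (hg : An n g) (h : ℝ) (k : Fin n) : An n (Zop n h k g) := by
  have e : Zop n h k g = fun q => c1 n q * Aop h k g q +
      c3 n k q * (∑ m, Aop h m (Aop h m g) q) -
      Complex.I * (((h : ℂ) / Complex.I) * pd (ew k) g q) - c2 n h k q * g q := rfl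
  rw [e]
  exact ((An_c1.mul (hg.aop h k)).add ((An_c3 k).mul
      (An.sum _ _ fun m => (hg.aop h m).aop h m))).sub
    (An.cmul _ (An.cmul _ (hg.pdv (ew k)))) |>.sub ((An_c2 h k).mul hg)

-- values of derivatives
lemma sum_mul_single (X : Fin n → ℂ) (m : Fin n) :
    ∑ k, X k * (Pi.single m 1 : Fin n → ℂ) k = X m := by
  rw [Finset.sum_eq_single m]
  · simp
  · intro b _ hb; simp [Pi.single_eq_of_ne hb]
  · simp

lemma single_mul_sum (X : Fin n → ℂ) (m : Fin n) :
    ∑ k, (Pi.single m 1 : Fin n → ℂ) k * X k = X m := by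
  rw [Finset.sum_eq_single m]
  · simp
  · intro b _ hb; simp [Pi.single_eq_of_ne hb]
  · simp

lemma single_symm (j k : Fin n) : (Pi.single j 1 : Fin n → ℂ) k = (Pi.single k 1 : Fin n → ℂ) j := by
  rcases eq_or_ne j k with rfl | hjk
  · rfl
  · rw [Pi.single_eq_of_ne (Ne.symm hjk), Pi.single_eq_of_ne hjk]

lemma diff_zeta (m : Fin n) : DifferentiableAt ℂ (fun q : Vn n => q.2 m) p :=
  (An_zeta m p).differentiableAt

lemma pd_sfun (v : Vn n) : pd v (sfun n) p = ∑ m, 2 * p.2 m * v.2 m := by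
  unfold sfun
  rw [pd_add (differentiableAt_const 1)
      (DifferentiableAt.fun_sum fun k _ => (diff_zeta k).fun_pow 2) v,
    pd_const, pd_sum _ _ (fun k _ => (diff_zeta k).fun_pow 2) v]
  rw [zero_add]
  refine Finset.sum_congr rfl fun m _ => ?_
  have e2 : (fun q : Vn n => q.2 m ^ 2) = fun q : Vn n => q.2 m ^ (1 + 1) := by norm_num
  rw [e2, pd_pow (diff_zeta m) 1 v, pd_zeta]
  push_cast; ring

lemma pd_sfun_ez (i : Fin n) : pd (ez i) (sfun n) p = 0 := by
  rw [pd_sfun]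
  simp [ez]

lemma pd_sfun_ew (m : Fin n) : pd (ew m) (sfun n) p = 2 * p.2 m := by
  rw [pd_sfun]
  exact sum_mul_single (fun k => 2 * p.2 k) m

lemma pd_bfun (hp : offCut n p) (v : Vn n) :
    2 * bfun n p * pd v (bfun n) p = pd v (sfun n) p := by
  have h2 : pd v (fun q => bfun n q ^ (1 + 1)) p = 2 * bfun n p ^ 1 * pd v (bfun n) p := by
    have := pd_pow (((An_bfun hp).differentiableAt)) 1 v
    rw [this]; norm_num
  have h3 : pd v (fun q => bfun n q ^ (1 + 1)) p = pd v (sfun n) p := by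
    refine pd_congr (fun q hq => ?_) hp v
    rw [show (1 + 1) = 2 from rfl, bfun_sq hq]
  rw [← h3, h2]
  ring

lemma pd_bfun_ez (hp : offCut n p) (i : Fin n) : pd (ez i) (bfun n) p = 0 := by
  have := pd_bfun hp (ez i)
  rw [pd_sfun_ez] at this
  rcases mul_eq_zero.1 this with h0 | h0
  · exact absurd (mul_eq_zero.1 h0) (by simp [bfun_ne hp])
  · exact h0

lemma pd_bfun_ew (hp : offCut n p) (m : Fin n) :
    pd (ew m) (bfun n) p = p.2 m * (bfun n p)⁻¹ := by
  have h1 := pd_bfun hp (ew m)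
  rw [pd_sfun_ew] at h1
  have hb := bfun_ne hp
  field_simp
  linear_combination h1 / 2


variable {h : ℝ}


lemma ez_snd (i k : Fin n) : (ez (n := n) i).2 k = 0 := rfl
lemma ew_snd (m k : Fin n) : (ew (n := n) m).2 k = (Pi.single m 1 : Fin n → ℂ) k := rfl

lemma Aop_val (m : Fin n) (u : Vn n → ℂ) (p : Vn n) :
    Aop h m u p = ((h : ℂ) / Complex.I) * pd (ez m) u p - p.2 m * u p := rfl

lemma binv_cancel2 (hp : offCut n p) (M : ℕ) :
    bfun n p ^ 2 * (bfun n p)⁻¹ ^ (M + 2) = (bfun n p)⁻¹ ^ M := by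
  have e : bfun n p ^ 2 * (bfun n p)⁻¹ ^ 2 = 1 := by
    rw [inv_pow]
    exact mul_inv_cancel₀ (pow_ne_zero 2 (bfun_ne hp))
  calc bfun n p ^ 2 * (bfun n p)⁻¹ ^ (M + 2)
      = (bfun n p ^ 2 * (bfun n p)⁻¹ ^ 2) * (bfun n p)⁻¹ ^ M := by ring
    _ = (bfun n p)⁻¹ ^ M := by rw [e, one_mul]

lemma binv_cancel1 (hp : offCut n p) (M : ℕ) :
    bfun n p * (bfun n p)⁻¹ ^ (M + 1) = (bfun n p)⁻¹ ^ M := by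
  have e : bfun n p * (bfun n p)⁻¹ = 1 := mul_inv_cancel₀ (bfun_ne hp)
  calc bfun n p * (bfun n p)⁻¹ ^ (M + 1)
      = (bfun n p * (bfun n p)⁻¹) * (bfun n p)⁻¹ ^ M := by ring
    _ = (bfun n p)⁻¹ ^ M := by rw [e, one_mul]

-- derivatives of the coefficients
lemma pd_c1 (hp : offCut n p) (v : Vn n) :
    pd v (c1 n) p = -(pd v (bfun n) p) * ((bfun n p) ^ 2)⁻¹ :=
  pd_inv (An_bfun hp).differentiableAt (bfun_ne hp) v

lemma pdz_c1 (hp : offCut n p) (i : Fin n) : pd (ez i) (c1 n) p = 0 := by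
  rw [pd_c1 hp, pd_bfun_ez hp]; ring

lemma pdw_c1 (hp : offCut n p) (m : Fin n) :
    pd (ew m) (c1 n) p = -(p.2 m) * (bfun n p)⁻¹ ^ 3 := by
  rw [pd_c1 hp, pd_bfun_ew hp]
  simp only [← inv_pow]
  ring

lemma pd_b3inv (hp : offCut n p) (v : Vn n) :
    pd v (fun q => ((bfun n q) ^ 3)⁻¹) p
      = -(3 * bfun n p ^ 2 * pd v (bfun n) p) * (((bfun n p) ^ 3) ^ 2)⁻¹ := by
  have hd : DifferentiableAt ℂ (fun q => bfun n q ^ 3) p :=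
    (An_bfun hp).differentiableAt.pow 3
  rw [pd_inv hd (pow_ne_zero 3 (bfun_ne hp)) v]
  have e : (fun q => bfun n q ^ 3) = fun q => bfun n q ^ (2 + 1) := by norm_num
  rw [e, pd_pow (An_bfun hp).differentiableAt 2 v]
  norm_num

lemma pd_b2inv (hp : offCut n p) (v : Vn n) :
    pd v (fun q => ((bfun n q) ^ 2)⁻¹) p
      = -(2 * bfun n p * pd v (bfun n) p) * (((bfun n p) ^ 2) ^ 2)⁻¹ := by
  have hd : DifferentiableAt ℂ (fun q => bfun n q ^ 2) p :=
    (An_bfun hp).differentiableAt.pow 2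
  rw [pd_inv hd (pow_ne_zero 2 (bfun_ne hp)) v]
  have e : (fun q => bfun n q ^ 2) = fun q => bfun n q ^ (1 + 1) := by norm_num
  rw [e, pd_pow (An_bfun hp).differentiableAt 1 v]
  norm_num

lemma diff_b3inv (hp : offCut n p) : DifferentiableAt ℂ (fun q => ((bfun n q) ^ 3)⁻¹) p :=
  (((An_bfun hp).pow 3).inv (pow_ne_zero 3 (bfun_ne hp))).differentiableAt

lemma diff_b2inv (hp : offCut n p) : DifferentiableAt ℂ (fun q => ((bfun n q) ^ 2)⁻¹) p :=
  (((An_bfun hp).pow 2).inv (pow_ne_zero 2 (bfun_ne hp))).differentiableAt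

lemma pdz_c3 (hp : offCut n p) (i k : Fin n) : pd (ez i) (c3 n k) p = 0 := by
  unfold c3
  rw [pd_mul (differentiableAt_const _|>.fun_mul (diff_b3inv hp)) (diff_zeta k) (ez i),
    pd_cmul _ (diff_b3inv hp), pd_b3inv hp, pd_bfun_ez hp, pd_zeta, ez_snd]
  ring

lemma pdw_c3 (hp : offCut n p) (m k : Fin n) :
    pd (ew m) (c3 n k) p = -(3 / 2) * p.2 m * (bfun n p)⁻¹ ^ 5 * p.2 k
      + (1 / 2) * (bfun n p)⁻¹ ^ 3 * (Pi.single m 1 : Fin n → ℂ) k := by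
  unfold c3
  rw [pd_mul (differentiableAt_const _|>.fun_mul (diff_b3inv hp)) (diff_zeta k) (ew m),
    pd_cmul _ (diff_b3inv hp), pd_b3inv hp, pd_bfun_ew hp, pd_zeta, ew_snd]
  simp only [← inv_pow]
  linear_combination (-(3 : ℂ)/2 * p.2 k * p.2 m) * binv_cancel2 hp 5

lemma pdz_c2 (hp : offCut n p) (i k : Fin n) : pd (ez i) (c2 n h k) p = 0 := by
  unfold c2
  rw [pd_mul (differentiableAt_const _|>.fun_mul (diff_b2inv hp)) (diff_zeta k) (ez i),
    pd_cmul _ (diff_b2inv hp), pd_b2inv hp, pd_bfun_ez hp, pd_zeta, ez_snd]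
  ring

lemma pdw_c2 (hp : offCut n p) (m k : Fin n) :
    pd (ew m) (c2 n h k) p = -((n : ℂ) / 2) * (h : ℂ) * p.2 m * (bfun n p)⁻¹ ^ 4 * p.2 k
      + ((n : ℂ) / 4) * (h : ℂ) * (bfun n p)⁻¹ ^ 2 * (Pi.single m 1 : Fin n → ℂ) k := by
  unfold c2
  rw [pd_mul (differentiableAt_const _|>.fun_mul (diff_b2inv hp)) (diff_zeta k) (ew m),
    pd_cmul _ (diff_b2inv hp), pd_b2inv hp, pd_bfun_ew hp, pd_zeta, ew_snd]
  simp only [← inv_pow]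
  linear_combination (-(n : ℂ)/2 * (h : ℂ) * p.2 k * p.2 m) * binv_cancel1 hp 4

-- Aop combinators
lemma Aop_congr (huw : ∀ q, offCut n q → u q = w q) (hp : offCut n p) (m : Fin n) :
    Aop h m u p = Aop h m w p := by
  unfold Aop
  rw [pd_congr huw hp, huw p hp]

lemma Aop_add (hu : DifferentiableAt ℂ u p) (hw : DifferentiableAt ℂ w p) (m : Fin n) :
    Aop h m (fun q => u q + w q) p = Aop h m u p + Aop h m w p := by
  unfold Aop
  rw [pd_add hu hw]
  ring

lemma Aop_sub (hu : DifferentiableAt ℂ u p) (hw : DifferentiableAt ℂ w p) (m : Fin n) :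
    Aop h m (fun q => u q - w q) p = Aop h m u p - Aop h m w p := by
  unfold Aop
  rw [pd_sub hu hw]
  ring

lemma Aop_cmul (c : ℂ) (hu : DifferentiableAt ℂ u p) (m : Fin n) :
    Aop h m (fun q => c * u q) p = c * Aop h m u p := by
  unfold Aop
  rw [pd_cmul c hu]
  ring

lemma Aop_coeff {φ : Vn n → ℂ} (hφ : DifferentiableAt ℂ φ p) (hu : DifferentiableAt ℂ u p)
    (hz : pd (ez m) φ p = 0) :
    Aop h m (fun q => φ q * u q) p = φ p * Aop h m u p := by
  unfold Aop
  rw [pd_mul hφ hu, hz]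
  ring

lemma Aop_sum {ι : Type*} (s : Finset ι) (F : ι → Vn n → ℂ)
    (hF : ∀ i ∈ s, DifferentiableAt ℂ (F i) p) (m : Fin n) :
    Aop h m (fun q => ∑ i ∈ s, F i q) p = ∑ i ∈ s, Aop h m (F i) p := by
  unfold Aop
  rw [pd_sum s F hF, Finset.mul_sum, Finset.mul_sum, ← Finset.sum_sub_distrib]

-- commutation lemmas
lemma pd_Aop (hu : An n u) (hp : offCut n p) (v : Vn n) (l : Fin n) :
    pd v (Aop h l u) p = ((h : ℂ) / Complex.I) * pd v (pd (ez l) u) p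
      - (v.2 l * u p + p.2 l * pd v u p) := by
  unfold Aop
  rw [pd_sub (differentiableAt_const _|>.fun_mul ((hu.pdv (ez l)).diff hp)) ((diff_zeta l).fun_mul (hu.diff hp)) v,
    pd_cmul _ ((hu.pdv (ez l)).diff hp), pd_mul (diff_zeta l) (hu.diff hp), pd_zeta]
  ring

lemma comm_AA (hu : An n u) (hp : offCut n p) (i l : Fin n) :
    Aop h i (Aop h l u) p = Aop h l (Aop h i u) p := by
  rw [Aop_val i (Aop h l u), Aop_val l (Aop h i u),
    pd_Aop hu hp (ez i) l, pd_Aop hu hp (ez l) i,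
    pd_swap hu hp (ez i) (ez l), Aop_val, Aop_val]
  simp only [ez_snd]
  ring

lemma comm_EA (hu : An n u) (hp : offCut n p) (j l : Fin n) :
    pd (ew j) (Aop h l u) p = Aop h l (pd (ew j) u) p
      - (Pi.single j 1 : Fin n → ℂ) l * u p := by
  rw [pd_Aop hu hp (ew j) l, pd_swap hu hp (ew j) (ez l), Aop_val, ew_snd]
  ring

lemma pd_Q_ew (hu : An n u) (hp : offCut n p) (j : Fin n) :
    pd (ew j) (fun q => ∑ m, Aop h m (Aop h m u) q) p
      = (∑ m, Aop h m (Aop h m (pd (ew j) u)) p) - 2 * Aop h j u p := by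
  rw [pd_sum Finset.univ _ (fun m _ => (((hu.aop h m).aop h m).diff hp)) (ew j)]
  have e : ∀ m : Fin n, pd (ew j) (Aop h m (Aop h m u)) p
      = Aop h m (Aop h m (pd (ew j) u)) p
        - 2 * ((Pi.single j 1 : Fin n → ℂ) m * Aop h m u p) := by
    intro m
    rw [comm_EA (hu.aop h m) hp j m]
    have e2 : Aop h m (pd (ew j) (Aop h m u)) p
        = Aop h m (fun q => Aop h m (pd (ew j) u) q
            - (Pi.single j 1 : Fin n → ℂ) m * u q) p :=
      Aop_congr (fun q hq => comm_EA hu hq j m) hp m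
    rw [e2, Aop_sub (((hu.pdv (ew j)).aop h m).diff hp)
        ((differentiableAt_const _).fun_mul (hu.diff hp)) m,
      Aop_cmul _ (hu.diff hp)]
    ring
  rw [Finset.sum_congr rfl (fun m _ => e m), Finset.sum_sub_distrib, ← Finset.mul_sum,
    single_mul_sum (fun m => Aop h m u p) j]

lemma sumAA_comm (hu : An n u) (hp : offCut n p) (i : Fin n) :
    ∑ m, Aop h i (Aop h m (Aop h m u)) p = ∑ m, Aop h m (Aop h m (Aop h i u)) p := by
  refine Finset.sum_congr rfl fun m _ => ?_
  rw [comm_AA (hu.aop h m) hp i m]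
  exact Aop_congr (fun q hq => comm_AA hu hq i m) hp m


variable {f : Vn n → ℂ}


lemma c3_val (k : Fin n) : c3 n k p = (1 / 2) * (bfun n p)⁻¹ ^ 3 * p.2 k := by
  unfold c3; rw [← inv_pow]

lemma c2_val (k : Fin n) : c2 n h k p = ((n : ℂ) / 4) * (h : ℂ) * (bfun n p)⁻¹ ^ 2 * p.2 k := by
  unfold c2; rw [← inv_pow]

lemma T1 (hf : An n f) (hp : offCut n p) (i k : Fin n) :
    Aop h i (Zop n h k f) p =
      c1 n p * Aop h i (Aop h k f) p
      + c3 n k p * (∑ m, Aop h i (Aop h m (Aop h m f)) p)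
      - Complex.I * (((h : ℂ) / Complex.I) * Aop h i (pd (ew k) f) p)
      - c2 n h k p * Aop h i f p := by
  have hAk : An n (Aop h k f) := hf.aop h k
  have hQ : An n (fun q => ∑ m, Aop h m (Aop h m f) q) :=
    An.sum _ _ fun m => (hf.aop h m).aop h m
  have hEk : An n (pd (ew k) f) := hf.pdv (ew k)
  have d1 : DifferentiableAt ℂ (fun q => c1 n q * Aop h k f q) p := (An_c1.mul hAk).diff hp
  have d2 : DifferentiableAt ℂ (fun q => c3 n k q * (∑ m, Aop h m (Aop h m f) q)) p :=
    ((An_c3 k).mul hQ).diff hp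
  have d3 : DifferentiableAt ℂ
      (fun q => Complex.I * (((h : ℂ) / Complex.I) * pd (ew k) f q)) p :=
    (An.cmul _ (An.cmul _ hEk)).diff hp
  have d4 : DifferentiableAt ℂ (fun q => c2 n h k q * f q) p := ((An_c2 h k).mul hf).diff hp
  have e : Zop n h k f = fun q =>
      c1 n q * Aop h k f q + c3 n k q * (∑ m, Aop h m (Aop h m f) q)
      - Complex.I * (((h : ℂ) / Complex.I) * pd (ew k) f q) - c2 n h k q * f q := rfl
  rw [e, Aop_sub ((d1.fun_add d2).fun_sub d3) d4 i, Aop_sub (d1.fun_add d2) d3 i, Aop_add d1 d2 i,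
    Aop_coeff (An_c1.diff hp) (hAk.diff hp) (pdz_c1 hp i),
    Aop_coeff ((An_c3 k).diff hp) (hQ.diff hp) (pdz_c3 hp i k),
    Aop_coeff ((An_c2 h k).diff hp) (hf.diff hp) (pdz_c2 hp i k),
    Aop_cmul _ ((An.cmul _ hEk).diff hp) i,
    Aop_cmul _ (hEk.diff hp) i,
    Aop_sum Finset.univ _ (fun m _ => ((hf.aop h m).aop h m).diff hp) i]

lemma T2 (hf : An n f) (hp : offCut n p) (k : Fin n) :
    ∑ m, Aop h m (Aop h m (Zop n h k f)) p =
      c1 n p * (∑ m, Aop h m (Aop h m (Aop h k f)) p)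
      + c3 n k p * (∑ m, ∑ l, Aop h m (Aop h m (Aop h l (Aop h l f))) p)
      - Complex.I * (((h : ℂ) / Complex.I) * (∑ m, Aop h m (Aop h m (pd (ew k) f)) p))
      - c2 n h k p * (∑ m, Aop h m (Aop h m f) p) := by
  have e : ∀ m : Fin n, Aop h m (Aop h m (Zop n h k f)) p =
      c1 n p * Aop h m (Aop h m (Aop h k f)) p
      + c3 n k p * (∑ l, Aop h m (Aop h m (Aop h l (Aop h l f))) p)
      - Complex.I * (((h : ℂ) / Complex.I) * Aop h m (Aop h m (pd (ew k) f)) p)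
      - c2 n h k p * Aop h m (Aop h m f) p := by
    intro m
    have hAkm : An n (Aop h m (Aop h k f)) := (hf.aop h k).aop h m
    have hSm : An n (fun q => ∑ l, Aop h m (Aop h l (Aop h l f)) q) :=
      An.sum _ _ fun l => ((hf.aop h l).aop h l).aop h m
    have hEkm : An n (Aop h m (pd (ew k) f)) := (hf.pdv (ew k)).aop h m
    have hAm : An n (Aop h m f) := hf.aop h m
    have d1 : DifferentiableAt ℂ (fun q => c1 n q * Aop h m (Aop h k f) q) p :=
      (An_c1.mul hAkm).diff hp
    have d2 : DifferentiableAt ℂ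
        (fun q => c3 n k q * (∑ l, Aop h m (Aop h l (Aop h l f)) q)) p :=
      ((An_c3 k).mul hSm).diff hp
    have d3 : DifferentiableAt ℂ
        (fun q => Complex.I * (((h : ℂ) / Complex.I) * Aop h m (pd (ew k) f) q)) p :=
      (An.cmul _ (An.cmul _ hEkm)).diff hp
    have d4 : DifferentiableAt ℂ (fun q => c2 n h k q * Aop h m f q) p :=
      ((An_c2 h k).mul hAm).diff hp
    rw [Aop_congr (fun q hq => T1 hf hq m k) hp m,
      Aop_sub ((d1.fun_add d2).fun_sub d3) d4 m, Aop_sub (d1.fun_add d2) d3 m, Aop_add d1 d2 m,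
      Aop_coeff (An_c1.diff hp) (hAkm.diff hp) (pdz_c1 hp m),
      Aop_coeff ((An_c3 k).diff hp) (hSm.diff hp) (pdz_c3 hp m k),
      Aop_coeff ((An_c2 h k).diff hp) (hAm.diff hp) (pdz_c2 hp m k),
      Aop_cmul _ ((An.cmul _ hEkm).diff hp) m,
      Aop_cmul _ (hEkm.diff hp) m,
      Aop_sum Finset.univ _ (fun l _ => (((hf.aop h l).aop h l).aop h m).diff hp) m]
  rw [Finset.sum_congr rfl fun m _ => e m]
  rw [Finset.sum_sub_distrib, Finset.sum_sub_distrib, Finset.sum_add_distrib,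
    ← Finset.mul_sum, ← Finset.mul_sum, ← Finset.mul_sum, ← Finset.mul_sum, ← Finset.mul_sum]

lemma T3 (hf : An n f) (hp : offCut n p) (j k : Fin n) :
    pd (ew j) (Zop n h k f) p =
      ( c1 n p * (Aop h k (pd (ew j) f) p - (Pi.single j 1 : Fin n → ℂ) k * f p)
        + Aop h k f p * (-(p.2 j) * (bfun n p)⁻¹ ^ 3) )
      + ( c3 n k p * ((∑ m, Aop h m (Aop h m (pd (ew j) f)) p) - 2 * Aop h j f p)
          + (∑ m, Aop h m (Aop h m f) p) *
            (-(3 / 2) * p.2 j * (bfun n p)⁻¹ ^ 5 * p.2 k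
              + (1 / 2) * (bfun n p)⁻¹ ^ 3 * (Pi.single j 1 : Fin n → ℂ) k) )
      - Complex.I * (((h : ℂ) / Complex.I) * pd (ew j) (pd (ew k) f) p)
      - ( c2 n h k p * pd (ew j) f p
          + f p * (-((n : ℂ) / 2) * (h : ℂ) * p.2 j * (bfun n p)⁻¹ ^ 4 * p.2 k
              + ((n : ℂ) / 4) * (h : ℂ) * (bfun n p)⁻¹ ^ 2 * (Pi.single j 1 : Fin n → ℂ) k) ) := by
  have hAk : An n (Aop h k f) := hf.aop h k
  have hQ : An n (fun q => ∑ m, Aop h m (Aop h m f) q) :=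
    An.sum _ _ fun m => (hf.aop h m).aop h m
  have hEk : An n (pd (ew k) f) := hf.pdv (ew k)
  have d1 : DifferentiableAt ℂ (fun q => c1 n q * Aop h k f q) p := (An_c1.mul hAk).diff hp
  have d2 : DifferentiableAt ℂ (fun q => c3 n k q * (∑ m, Aop h m (Aop h m f) q)) p :=
    ((An_c3 k).mul hQ).diff hp
  have d3 : DifferentiableAt ℂ
      (fun q => Complex.I * (((h : ℂ) / Complex.I) * pd (ew k) f q)) p :=
    (An.cmul _ (An.cmul _ hEk)).diff hp
  have d4 : DifferentiableAt ℂ (fun q => c2 n h k q * f q) p := ((An_c2 h k).mul hf).diff hp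
  have e : Zop n h k f = fun q =>
      c1 n q * Aop h k f q + c3 n k q * (∑ m, Aop h m (Aop h m f) q)
      - Complex.I * (((h : ℂ) / Complex.I) * pd (ew k) f q) - c2 n h k q * f q := rfl
  rw [e, pd_sub ((d1.fun_add d2).fun_sub d3) d4 (ew j), pd_sub (d1.fun_add d2) d3 (ew j),
    pd_add d1 d2 (ew j),
    pd_mul (An_c1.diff hp) (hAk.diff hp) (ew j),
    pd_mul ((An_c3 k).diff hp) (hQ.diff hp) (ew j),
    pd_mul ((An_c2 h k).diff hp) (hf.diff hp) (ew j),
    pd_cmul _ ((An.cmul _ hEk).diff hp) (ew j),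
    pd_cmul _ (hEk.diff hp) (ew j),
    comm_EA hf hp j k, pd_Q_ew hf hp j,
    pdw_c1 hp j, pdw_c3 hp j k, pdw_c2 hp j k]


end ZopAux

/-- The operators `Z_j` commute: `[Z_j, Z_k] = 0` on holomorphic functions on the
region where `⟨ζ⟩` is defined and nonvanishing. -/
theorem Zop_commute (n : ℕ) (h : ℝ) (hh : 0 < h) (j k : Fin n)
    (f : (Fin n → ℂ) × (Fin n → ℂ) → ℂ)
    (hf : ∀ p : (Fin n → ℂ) × (Fin n → ℂ), offCut n p → AnalyticAt ℂ f p) :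
    ∀ p : (Fin n → ℂ) × (Fin n → ℂ), offCut n p →
      Zop n h j (Zop n h k f) p = Zop n h k (Zop n h j f) p := by
  intro p hp
  have hf' : ZopAux.An n f := hf
  rw [ZopAux.Zop_eq h j (Zop n h k f) p, ZopAux.Zop_eq h k (Zop n h j f) p,
    ZopAux.T1 hf' hp j k, ZopAux.T1 hf' hp k j,
    ZopAux.T2 hf' hp k, ZopAux.T2 hf' hp j,
    ZopAux.T3 hf' hp j k, ZopAux.T3 hf' hp k j,
    ZopAux.Zop_eq h k f p, ZopAux.Zop_eq h j f p,
    ZopAux.comm_AA hf' hp k j,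
    ZopAux.pd_swap hf' hp (ZopAux.ew k) (ZopAux.ew j),
    ZopAux.sumAA_comm hf' hp j, ZopAux.sumAA_comm hf' hp k,
    ZopAux.single_symm k j]
  simp only [ZopAux.c1, ZopAux.c3_val, ZopAux.c2_val]
  ring


end
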